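/- Let (Ω, 𝓕, ℙ) be a probability space and 𝒢 ⊆ 𝓕 a sub-σ-algebra. Let ξ be an ℝ^D-valued random vector such that 𝔼[(⟨ξ, v⟩)₊ | 𝒢] ≥ c almost surely for every 𝒢-measurable random unit vector v, where c > 0. Let g be a 𝒢-measurable random vector with ‖g‖ ≥ c₁ > 0 almost surely, let γ, K > 0 be constants, and let Y be a random variable with Y ≥ γ⟨g, ξ⟩ − Kγ² almost surely. Then 𝔼[Y₊ | 𝒢] ≥ c₁cγ − Kγ² almost surely, and consequently 𝔼[Y² | 𝒢] ≥ ( (c₁cγ − Kγ²)₊ )² almost surely. -/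

import Mathlib

open MeasureTheory Filter Topology
open scoped RealInnerProductSpace

/-- Inequalities (B.39)–(B.45): uniform excitability of the noise combined with
the drift inequality yields the conditional second-moment lower bound. -/
theorem stmt_13
    {Ω : Type*} {m0 : MeasurableSpace Ω} {μ : Measure Ω} [IsProbabilityMeasure μ]
    {m : MeasurableSpace Ω} (hm : m ≤ m0) {D : ℕ}
    (ξ : Ω → EuclideanSpace ℝ (Fin D))
    (c : ℝ) (hc : 0 < c)
    (hexcite : ∀ v : Ω → EuclideanSpace ℝ (Fin D),
      Measurable[m] v → (∀ ω, ‖v ω‖ = 1) →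
      ∀ᵐ ω ∂μ, c ≤ (μ[fun ω' => max (⟪ξ ω', v ω'⟫) 0 | m]) ω)
    (g : Ω → EuclideanSpace ℝ (Fin D)) (hgmeas : Measurable[m] g)
    (c₁ : ℝ) (hc₁ : 0 < c₁) (hg : ∀ᵐ ω ∂μ, c₁ ≤ ‖g ω‖)
    (γ K : ℝ) (hγ : 0 < γ) (hK : 0 < K)
    (Y : Ω → ℝ) (hYint : Integrable Y μ)
    (hY2int : Integrable (fun ω => Y ω ^ 2) μ)
    (hYlow : ∀ᵐ ω ∂μ, Y ω ≥ γ * ⟪g ω, ξ ω⟫ - K * γ ^ 2) :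
    (∀ᵐ ω ∂μ, c₁ * c * γ - K * γ ^ 2 ≤ (μ[fun ω' => max (Y ω') 0 | m]) ω) ∧
    (∀ᵐ ω ∂μ, (max (c₁ * c * γ - K * γ ^ 2) 0) ^ 2 ≤ (μ[fun ω' => Y ω' ^ 2 | m]) ω) := by
  classical
  have hne : (MeasureTheory.ae μ).NeBot := ae_neBot.2 (IsProbabilityMeasure.ne_zero μ)
  rcases Nat.eq_zero_or_pos D with hD | hD
  · exfalso
    subst hD
    have hz : ∀ ω, g ω = (0 : EuclideanSpace ℝ (Fin 0)) := fun ω => Subsingleton.elim _ _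
    have h0 : ∀ᵐ ω ∂μ, c₁ ≤ (0 : ℝ) := by
      filter_upwards [hg] with ω hω
      simpa [hz ω] using hω
    obtain ⟨ω, hω⟩ := h0.exists
    linarith
  -- unit vector
  set e : EuclideanSpace ℝ (Fin D) := EuclideanSpace.single ⟨0, hD⟩ 1 with he
  have hen : ‖e‖ = 1 := by simp [he]
  set v : Ω → EuclideanSpace ℝ (Fin D) :=
    fun ω => if g ω = 0 then e else ‖g ω‖⁻¹ • g ω with hvdef
  have hvmeas : Measurable[m] v := by
    refine Measurable.ite (hgmeas (measurableSet_singleton 0)) measurable_const ?_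
    exact (hgmeas.norm.inv).smul hgmeas
  have hvnorm : ∀ ω, ‖v ω‖ = 1 := by
    intro ω
    by_cases h : g ω = 0
    · simp [hvdef, h, hen]
    · have hn : ‖g ω‖ ≠ 0 := norm_ne_zero_iff.mpr h
      simp [hvdef, h, norm_smul, abs_of_nonneg (inv_nonneg.mpr (norm_nonneg _)),
        inv_mul_cancel₀ hn]
  set Z : Ω → ℝ := fun ω' => max (⟪ξ ω', v ω'⟫) 0 with hZdef
  have hZnn : ∀ ω, 0 ≤ Z ω := fun ω => le_max_right _ _
  have hexc := hexcite v hvmeas hvnorm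
  by_cases hZint : Integrable Z μ
  swap
  · exfalso
    rw [condExp_of_not_integrable hZint] at hexc
    obtain ⟨ω, hω⟩ := hexc.exists
    simp at hω
    linarith
  -- pointwise bound
  have hpt : ∀ᵐ ω ∂μ, c₁ * γ * Z ω ≤ max (Y ω) 0 + K * γ ^ 2 := by
    filter_upwards [hg, hYlow] with ω h1 h2
    have hn : 0 < ‖g ω‖ := lt_of_lt_of_le hc₁ h1
    have hgne : g ω ≠ 0 := norm_pos_iff.mp hn
    have hv : v ω = ‖g ω‖⁻¹ • g ω := by simp [hvdef, hgne]
    have hiZ : Z ω = ‖g ω‖⁻¹ * max (⟪ξ ω, g ω⟫) 0 := by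
      rw [hZdef]
      simp only [hv, real_inner_smul_right]
      rw [mul_max_of_nonneg _ _ (inv_nonneg.mpr (norm_nonneg _)), mul_zero]
    have hcomm : ⟪ξ ω, g ω⟫ = ⟪g ω, ξ ω⟫ := real_inner_comm _ _
    have hmax : 0 ≤ max (⟪ξ ω, g ω⟫) 0 := le_max_right _ _
    have hinv : c₁ * ‖g ω‖⁻¹ ≤ 1 := by
      rw [← div_eq_mul_inv]
      exact (div_le_one hn).mpr h1
    have hstep1 : c₁ * γ * Z ω ≤ γ * max (⟪ξ ω, g ω⟫) 0 := by
      rw [hiZ]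
      nlinarith [mul_le_mul_of_nonneg_right hinv hmax]
    rcases le_total (⟪ξ ω, g ω⟫) 0 with ht | ht
    · rw [max_eq_right ht] at hstep1
      have : 0 ≤ max (Y ω) 0 := le_max_right _ _
      nlinarith
    · rw [max_eq_left ht] at hstep1
      have hY : γ * ⟪ξ ω, g ω⟫ ≤ Y ω + K * γ ^ 2 := by rw [hcomm]; linarith
      have : Y ω ≤ max (Y ω) 0 := le_max_left _ _
      linarith
  have hf1int : Integrable (fun ω => c₁ * γ * Z ω) μ := hZint.const_mul (c₁ * γ)
  have hmaxint : Integrable (fun ω => max (Y ω) 0) μ := hYint.pos_part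
  have hf2int : Integrable (fun ω => max (Y ω) 0 + K * γ ^ 2) μ :=
    hmaxint.add (integrable_const _)
  have hmono := condExp_mono (m := m) hf1int hf2int hpt
  have hsmul1 : μ[fun ω => c₁ * γ * Z ω | m] =ᵐ[μ] (c₁ * γ) • μ[Z | m] := by
    have : (fun ω => c₁ * γ * Z ω) = (c₁ * γ) • Z := rfl
    rw [this]
    exact condExp_smul (c₁ * γ) Z m
  have hadd1 : μ[fun ω => max (Y ω) 0 + K * γ ^ 2 | m]
      =ᵐ[μ] μ[fun ω => max (Y ω) 0 | m] + fun _ => K * γ ^ 2 := by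
    have h : (fun ω => max (Y ω) 0 + K * γ ^ 2)
        = (fun ω => max (Y ω) 0) + fun _ => K * γ ^ 2 := rfl
    rw [h]
    refine (condExp_add hmaxint (integrable_const _) m).trans ?_
    rw [condExp_const hm]
  have hfirst : ∀ᵐ ω ∂μ, c₁ * c * γ - K * γ ^ 2 ≤ (μ[fun ω' => max (Y ω') 0 | m]) ω := by
    filter_upwards [hmono, hsmul1, hadd1, hexc] with ω h1 h2 h3 h4
    rw [h2] at h1
    rw [h3] at h1
    simp only [Pi.smul_apply, Pi.add_apply, smul_eq_mul] at h1
    have hcc : (c₁ * γ) * c ≤ (c₁ * γ) * (μ[Z | m]) ω :=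
      mul_le_mul_of_nonneg_left h4 (by positivity)
    nlinarith
  refine ⟨hfirst, ?_⟩
  -- second part
  set b : ℝ := max (c₁ * c * γ - K * γ ^ 2) 0 with hbdef
  have hbnn : 0 ≤ b := le_max_right _ _
  have hEnn : ∀ᵐ ω ∂μ, 0 ≤ (μ[fun ω' => max (Y ω') 0 | m]) ω :=
    condExp_nonneg (Filter.Eventually.of_forall fun ω => le_max_right _ _)
  have hEb : ∀ᵐ ω ∂μ, b ≤ (μ[fun ω' => max (Y ω') 0 | m]) ω := by
    filter_upwards [hfirst, hEnn] with ω h1 h2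
    exact max_le h1 h2
  have hpt2 : ∀ᵐ ω ∂μ, 2 * b * max (Y ω) 0 - b ^ 2 ≤ Y ω ^ 2 := by
    refine Filter.Eventually.of_forall fun ω => ?_
    have hsq : (max (Y ω) 0) ^ 2 ≤ Y ω ^ 2 := by
      rcases le_total (Y ω) 0 with h | h
      · rw [max_eq_right h]; simpa using sq_nonneg (Y ω)
      · rw [max_eq_left h]
    nlinarith [sq_nonneg (max (Y ω) 0 - b)]
  have hLint : Integrable (fun ω => 2 * b * max (Y ω) 0 - b ^ 2) μ :=
    (hmaxint.const_mul (2 * b)).sub (integrable_const _)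
  have hmono2 := condExp_mono (m := m) hLint hY2int hpt2
  have hLeq : μ[fun ω => 2 * b * max (Y ω) 0 - b ^ 2 | m]
      =ᵐ[μ] (2 * b) • μ[fun ω' => max (Y ω') 0 | m] - fun _ => b ^ 2 := by
    have h : (fun ω => 2 * b * max (Y ω) 0 - b ^ 2)
        = ((2 * b) • fun ω' => max (Y ω') 0) - fun _ => b ^ 2 := rfl
    rw [h]
    refine (condExp_sub (hmaxint.const_mul (2 * b)) (integrable_const _) m).trans ?_
    rw [condExp_const hm]
    exact (condExp_smul (2 * b) _ m).sub EventuallyEq.rfl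
  filter_upwards [hmono2, hLeq, hEb] with ω h1 h2 h3
  rw [h2] at h1
  simp only [Pi.sub_apply, Pi.smul_apply, smul_eq_mul] at h1
  have : (2 * b) * b ≤ (2 * b) * (μ[fun ω' => max (Y ω') 0 | m]) ω :=
    mul_le_mul_of_nonneg_left h3 (by positivity)
  nlinarith
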